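/- Let R be a G-graded ring. If the intersection graph of graded left ideals Gr_G(R) is disconnected, then it has no edges at all (i.e., it is a null graph on at least two vertices). -/

import Mathlib

variable {G R : Type*} [AddGroup G] [DecidableEq G] [Ring R]

/-- The set of proper nontrivial `G`-graded left ideals of `R`. -/
def hV (𝒜 : G → AddSubgroup R) [GradedRing 𝒜] : Set (Ideal R) :=
  {I | I ≠ ⊥ ∧ I ≠ ⊤ ∧ Ideal.IsHomogeneous 𝒜 I}

/-- The intersection graph on a set of (left) ideals: two distinct ideals are
adjacent iff their intersection is nonzero. -/
def interGraph (V : Set (Ideal R)) : SimpleGraph V where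
  Adj I J := I ≠ J ∧ (I : Ideal R) ⊓ (J : Ideal R) ≠ ⊥
  symm := ⟨fun I J ⟨h1, h2⟩ => ⟨h1.symm, by rwa [inf_comm] at h2⟩⟩
  loopless := ⟨fun I ⟨h1, _⟩ => h1 rfl⟩

/-- Core lemma: if `A` and `C` are vertices with no path between them, then the
only graded vertex contained in `C` is `C` itself. -/
lemma core (𝒜 : G → AddSubgroup R) [GradedRing 𝒜]
    {A C D : Ideal R} (hA : A ∈ hV 𝒜) (hC : C ∈ hV 𝒜) (hD : D ∈ hV 𝒜)
    (hDC : D ≤ C)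
    (hnr : ¬ (interGraph (hV 𝒜)).Reachable ⟨A, hA⟩ ⟨C, hC⟩) : D = C := by
  have hAC : A ≠ C := by
    rintro rfl
    exact hnr (SimpleGraph.Reachable.refl _)
  have hACbot : A ⊓ C = ⊥ := by
    by_contra hne
    exact hnr (SimpleGraph.Adj.reachable ⟨by simpa [Subtype.ext_iff] using hAC, hne⟩)
  have hsup : A ⊔ D = ⊤ := by
    by_contra hne
    have hM : A ⊔ D ∈ hV 𝒜 := by
      refine ⟨?_, hne, hA.2.2.sup hD.2.2⟩
      intro hbot
      exact hA.1 (le_bot_iff.mp (hbot ▸ le_sup_left))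
    have hMA : A ≠ A ⊔ D := by
      intro hEq
      have hDbot : D ≤ ⊥ := hACbot ▸ le_inf (hEq ▸ le_sup_right) hDC
      exact hD.1 (le_bot_iff.mp hDbot)
    have hMC : A ⊔ D ≠ C := by
      intro hEq
      have : A ≤ A ⊓ C := le_inf le_rfl (hEq ▸ le_sup_left)
      exact hA.1 (le_bot_iff.mp (hACbot ▸ this))
    have adj1 : (interGraph (hV 𝒜)).Adj ⟨A, hA⟩ ⟨A ⊔ D, hM⟩ := by
      refine ⟨by simpa [Subtype.ext_iff] using hMA, ?_⟩
      rw [inf_eq_left.mpr le_sup_left]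
      exact hA.1
    have adj2 : (interGraph (hV 𝒜)).Adj ⟨A ⊔ D, hM⟩ ⟨C, hC⟩ := by
      refine ⟨by simpa [Subtype.ext_iff] using hMC, ?_⟩
      intro hbot
      exact hD.1 (le_bot_iff.mp (hbot ▸ le_inf le_sup_right hDC))
    exact hnr (adj1.reachable.trans adj2.reachable)
  refine le_antisymm hDC fun c hc => ?_
  have hcm : c ∈ A ⊔ D := hsup ▸ Submodule.mem_top
  obtain ⟨y, hy, z, hz, rfl⟩ := Submodule.mem_sup.mp hcm
  have hyC : y ∈ C := by
    have : y = y + z - z := (add_sub_cancel_right y z).symm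
    rw [this]
    exact sub_mem hc (hDC hz)
  have : y ∈ A ⊓ C := ⟨hy, hyC⟩
  rw [hACbot] at this
  have hy0 : y = 0 := by simpa using this
  simpa [hy0] using hz

/-- If the intersection graph of graded left ideals is disconnected,
then it is a null graph (no edges) on at least two vertices. -/
theorem stmt1 (𝒜 : G → AddSubgroup R) [GradedRing 𝒜]
    (h : ¬ (interGraph (hV 𝒜)).Preconnected) :
    (∀ I J : hV 𝒜, ¬ (interGraph (hV 𝒜)).Adj I J) ∧ 2 ≤ (hV 𝒜).encard := by
  rw [SimpleGraph.Preconnected] at h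
  push_neg at h
  obtain ⟨A, C, hnr⟩ := h
  have hAC : A ≠ C := by rintro rfl; exact hnr (SimpleGraph.Reachable.refl _)
  constructor
  · rintro I J ⟨hIJ, hne⟩
    -- the intersection is a graded vertex below both I and J
    have hN : (I : Ideal R) ⊓ (J : Ideal R) ∈ hV 𝒜 := by
      refine ⟨hne, ?_, I.2.2.2.inf J.2.2.2⟩
      intro htop
      exact I.2.2.1 (top_le_iff.mp (htop ▸ inf_le_left))
    -- for any vertex X, one of A, C is unreachable from X
    have key : ∀ X : hV 𝒜, ∃ E : hV 𝒜,
        ¬ (interGraph (hV 𝒜)).Reachable E X := by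
      intro X
      by_contra hcon
      push_neg at hcon
      exact hnr ((hcon A).trans (hcon C).symm)
    obtain ⟨E, hE⟩ := key I
    obtain ⟨F, hF⟩ := key J
    have h1 : (I : Ideal R) ⊓ (J : Ideal R) = I :=
      core 𝒜 E.2 I.2 hN inf_le_left (by simpa using hE)
    have h2 : (I : Ideal R) ⊓ (J : Ideal R) = J :=
      core 𝒜 F.2 J.2 hN inf_le_right (by simpa using hF)
    exact hIJ (Subtype.ext (h1 ▸ h2))
  · have hsub : {(A : Ideal R), (C : Ideal R)} ⊆ hV 𝒜 := by
      rintro x (rfl | rfl)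
      · exact A.2
      · exact C.2
    have : ({(A : Ideal R), (C : Ideal R)} : Set (Ideal R)).encard = 2 :=
      Set.encard_pair (by simpa [Subtype.ext_iff] using hAC)
    calc (2 : ℕ∞) = _ := this.symm
      _ ≤ _ := Set.encard_mono hsub
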